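/- For every simple regular expression E₁ over an alphabet α and every nonempty word w over α: ∂_w(E₁*) ⊆ ⋃_{v} ∂_v(E₁)⊙E₁*, where v ranges over the nonempty suffixes of w and 𝒮⊙F = {G·F | G ∈ 𝒮}. -/
import Mathlib


open scoped Classical

/-- The Antimirov partial derivative of a regular expression with respect to a symbol. -/
noncomputable def aderiv {α : Type*} (a : α) : RegularExpression α → Set (RegularExpression α)
  | .zero => ∅
  | .epsilon => ∅
  | .char b => if b = a then {1} else ∅
  | .plus E₁ E₂ => aderiv a E₁ ∪ aderiv a E₂
  | .comp E₁ E₂ =>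
      if [] ∈ E₁.matches' then ((· * E₂) '' aderiv a E₁) ∪ aderiv a E₂
      else (· * E₂) '' aderiv a E₁
  | .star E₁ => (· * E₁.star) '' aderiv a E₁

/-- Iterated Antimirov partial derivative with respect to a word. -/
noncomputable def aderivWord {α : Type*} : List α → RegularExpression α → Set (RegularExpression α)
  | [], E => {E}
  | a :: w, E => ⋃ F ∈ aderiv a E, aderivWord w F

/-- Left quotient of a language by a word. -/
def lquot {α : Type*} (w : List α) (L : Language α) : Language α := {v | w ++ v ∈ L}

lemma aderiv_mul {α : Type*} (a : α) (G F : RegularExpression α) :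
    aderiv a (G * F) =
      if [] ∈ G.matches' then ((· * F) '' aderiv a G) ∪ aderiv a F
      else (· * F) '' aderiv a G := rfl

lemma aderiv_star {α : Type*} (a : α) (E : RegularExpression α) :
    aderiv a E.star = (· * E.star) '' aderiv a E := rfl

lemma mem_aderivWord_cons {α : Type*} {a : α} {w : List α} {E x : RegularExpression α} :
    x ∈ aderivWord (a :: w) E ↔ ∃ F ∈ aderiv a E, x ∈ aderivWord w F := by
  simp [aderivWord]

lemma aderivWord_mul_subset {α : Type*} (w : List α) (G F : RegularExpression α) :
    aderivWord w (G * F) ⊆ ((· * F) '' aderivWord w G) ∪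
      ⋃ v ∈ {v : List α | v ≠ [] ∧ v <:+ w}, aderivWord v F := by
  induction w generalizing G with
  | nil =>
    intro x hx
    simp only [aderivWord, Set.mem_singleton_iff] at hx
    exact Or.inl ⟨G, rfl, hx.symm⟩
  | cons a w ih =>
    intro x hx
    obtain ⟨y, hy, hx⟩ := mem_aderivWord_cons.1 hx
    rw [aderiv_mul] at hy
    have hcase : (y ∈ (· * F) '' aderiv a G) ∨ y ∈ aderiv a F := by
      by_cases h : [] ∈ G.matches'
      · rw [if_pos h] at hy; exact hy
      · rw [if_neg h] at hy; exact Or.inl hy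
    rcases hcase with ⟨H, hH, rfl⟩ | hyF
    · rcases ih H hx with ⟨K, hK, rfl⟩ | hsuf
      · exact Or.inl ⟨K, mem_aderivWord_cons.2 ⟨H, hH, hK⟩, rfl⟩
      · obtain ⟨v, ⟨hv0, hvs⟩, hxv⟩ := Set.mem_iUnion₂.1 hsuf
        exact Or.inr (Set.mem_iUnion₂.2 ⟨v, ⟨hv0, hvs.trans (List.suffix_cons a w)⟩, hxv⟩)
    · exact Or.inr (Set.mem_iUnion₂.2 ⟨a :: w, ⟨by simp, List.suffix_refl _⟩,
        mem_aderivWord_cons.2 ⟨y, hyF, hx⟩⟩)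

lemma antimirov_star_aux {α : Type*} (E₁ : RegularExpression α) :
    ∀ n (a : α) (w : List α), w.length ≤ n →
    aderivWord (a :: w) E₁.star ⊆
      ⋃ v ∈ {v : List α | v ≠ [] ∧ v <:+ a :: w}, (· * E₁.star) '' aderivWord v E₁ := by
  intro n
  induction n with
  | zero =>
    intro a w hw x hx
    have hw0 : w = [] := List.length_eq_zero_iff.1 (Nat.le_zero.1 hw)
    subst hw0
    obtain ⟨y, hy, hx⟩ := mem_aderivWord_cons.1 hx
    rw [aderiv_star] at hy
    obtain ⟨G, hG, rfl⟩ := hy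
    simp only [aderivWord, Set.mem_singleton_iff] at hx
    subst hx
    exact Set.mem_iUnion₂.2 ⟨[a], ⟨by simp, List.suffix_refl _⟩,
      ⟨G, mem_aderivWord_cons.2 ⟨G, hG, rfl⟩, rfl⟩⟩
  | succ n ih =>
    intro a w hw x hx
    obtain ⟨y, hy, hx⟩ := mem_aderivWord_cons.1 hx
    rw [aderiv_star] at hy
    obtain ⟨G, hG, rfl⟩ := hy
    rcases aderivWord_mul_subset w G E₁.star hx with ⟨H, hH, rfl⟩ | hsuf
    · exact Set.mem_iUnion₂.2 ⟨a :: w, ⟨by simp, List.suffix_refl _⟩,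
        ⟨H, mem_aderivWord_cons.2 ⟨G, hG, hH⟩, rfl⟩⟩
    · obtain ⟨v, ⟨hv0, hvs⟩, hxv⟩ := Set.mem_iUnion₂.1 hsuf
      obtain ⟨b, v', rfl⟩ := List.exists_cons_of_ne_nil hv0
      have hlen : v'.length ≤ n := by
        have := hvs.length_le
        simp at this
        omega
      obtain ⟨u, ⟨hu0, hus⟩, hxu⟩ := Set.mem_iUnion₂.1 (ih b v' hlen hxv)
      exact Set.mem_iUnion₂.2 ⟨u, ⟨hu0, (hus.trans hvs).trans (List.suffix_cons a w)⟩, hxu⟩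

theorem antimirov_star_subset {α : Type*} (E₁ : RegularExpression α) (a : α) (w : List α) :
    aderivWord (a :: w) E₁.star ⊆
      ⋃ v ∈ {v : List α | v ≠ [] ∧ v <:+ a :: w}, (· * E₁.star) '' aderivWord v E₁ := by
  exact antimirov_star_aux E₁ w.length a w le_rfl
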